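/- For every real number r > 1, setting L = \sqrt{2r-1}, the inequality L/r + (r-L)/r^2 > 1/r + (L-1)(2r-L)/(2 L r^2) holds. -/

import Mathlib

/-- For `r > 1` and `L = √(2r-1)`, the parity-node repair bound of the code `C₁`
strictly exceeds that of the proposed code. -/
theorem c1_vs_proposed_parity (r L : ℝ) (hr : 1 < r) (hL : L = Real.sqrt (2 * r - 1)) :
    L / r + (r - L) / r ^ 2 > 1 / r + (L - 1) * (2 * r - L) / (2 * L * r ^ 2) := by
  have h1 : (1 : ℝ) < 2 * r - 1 := by linarith
  have hL1 : 1 < L := by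
    rw [hL]; exact (Real.lt_sqrt (by norm_num)).2 (by linarith)
  have hsq : L ^ 2 = 2 * r - 1 := by
    rw [hL, Real.sq_sqrt (by linarith)]
  have hr0 : (0 : ℝ) < r := by linarith
  have hL0 : (0 : ℝ) < L := by linarith
  rw [gt_iff_lt, ← sub_pos]
  have key : L / r + (r - L) / r ^ 2 - (1 / r + (L - 1) * (2 * r - L) / (2 * L * r ^ 2))
      = (L - 1) * (2 * L * r - 1) / (2 * L * r ^ 2) := by
    field_simp
    ring_nf
    linear_combination (-1) * hsq
  rw [key]
  apply div_pos
  · apply mul_pos (by linarith)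
    nlinarith
  · positivity
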